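/- Suppose f : ℝ → ℝ is continuous with x·f(x) > 0 for all x ≠ 0 and f(0) = 0, g : [0,∞) → ℝ is continuous, and g is integrable on (0,∞) (g ∈ L¹(0,∞)). Then every continuous solution x of x'(t) = -f(x(t)) + g(t) for t > 0, x(0) = ξ, satisfies lim_{t→∞} x(t) = 0. -/

import Mathlib

open Filter Real Set Topology MeasureTheory

noncomputable section

/-- A function `f : (0,∞) → (0,∞)` is regularly varying at `0` with index `β` if
`f(λx)/f(x) → λ^β` as `x → 0⁺` for every `λ > 0`. -/
def RVat0 (f : ℝ → ℝ) (β : ℝ) : Prop :=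
  ∀ lam : ℝ, 0 < lam →
    Tendsto (fun x => f (lam * x) / f x) (nhdsWithin 0 (Set.Ioi 0)) (nhds (lam ^ β))

/-- A function `h : (0,∞) → (0,∞)` is regularly varying at `∞` with index `α` if
`h(λt)/h(t) → λ^α` as `t → ∞` for every `λ > 0`. -/
def RVatInf (h : ℝ → ℝ) (α : ℝ) : Prop :=
  ∀ lam : ℝ, 0 < lam →
    Tendsto (fun t => h (lam * t) / h t) atTop (nhds (lam ^ α))

/-- A continuous solution of the perturbed ODE `x'(t) = -f(x(t)) + g(t)`, `t > 0`,
with initial condition `x(0) = ξ`. -/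
def IsSol (f g : ℝ → ℝ) (ξ : ℝ) (x : ℝ → ℝ) : Prop :=
  ContinuousOn x (Set.Ici 0) ∧ x 0 = ξ ∧
    ∀ t : ℝ, 0 < t → HasDerivAt x (-f (x t) + g t) t

/-- Interval integrability of an integrable function on `(0,∞)`. -/
private lemma aux_ii {g : ℝ → ℝ} (hg : IntegrableOn g (Set.Ioi 0)) {a b : ℝ}
    (ha : 0 ≤ a) (hb : 0 ≤ b) : IntervalIntegrable g volume a b := by
  rw [intervalIntegrable_iff]
  exact hg.mono_set (fun u hu => lt_of_le_of_lt (le_min ha hb) hu.1)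

/-- Tail integrals of `|g|` are small. -/
private lemma aux_tail {g : ℝ → ℝ} (hg : IntegrableOn g (Set.Ioi 0)) :
    ∀ δ : ℝ, 0 < δ → ∃ T : ℝ, 0 < T ∧
      ∀ s t : ℝ, T ≤ s → s ≤ t → (∫ u in s..t, |g u|) < δ := by
  intro δ hδ
  have habs : IntegrableOn (fun u => |g u|) (Set.Ioi 0) := hg.abs
  have hH : Tendsto (fun t => ∫ u in (0:ℝ)..t, |g u|) atTop
      (nhds (∫ u in Set.Ioi 0, |g u|)) :=
    MeasureTheory.intervalIntegral_tendsto_integral_Ioi 0 habs tendsto_id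
  set I := ∫ u in Set.Ioi 0, |g u|
  have : ∀ᶠ t in atTop, |(∫ u in (0:ℝ)..t, |g u|) - I| < δ/2 := by
    have h1 : Tendsto (fun t => |(∫ u in (0:ℝ)..t, |g u|) - I|) atTop (nhds |I - I|) :=
      (hH.sub_const I).abs
    rw [sub_self, abs_zero] at h1
    exact h1.eventually_lt_const (by linarith)
  rw [eventually_atTop] at this
  obtain ⟨T₀, hT₀⟩ := this
  refine ⟨max T₀ 1, by positivity, fun s t hs hst => ?_⟩
  have hs0 : (0:ℝ) ≤ s := le_trans (by positivity) hs
  have ht0 : (0:ℝ) ≤ t := le_trans hs0 hst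
  have hadd : (∫ u in (0:ℝ)..s, |g u|) + (∫ u in s..t, |g u|) = ∫ u in (0:ℝ)..t, |g u| :=
    intervalIntegral.integral_add_adjacent_intervals (aux_ii habs le_rfl hs0)
      (aux_ii habs hs0 ht0)
  have h1 := hT₀ s (le_trans (le_max_left _ _) hs)
  have h2 := hT₀ t (le_trans (le_trans (le_max_left _ _) hs) hst)
  have := abs_lt.mp h1
  have := abs_lt.mp h2
  linarith [abs_lt.mp h1, abs_lt.mp h2]

/-- FTC for the solution. -/
private lemma aux_ftc {f g x : ℝ → ℝ} (hf : Continuous f)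
    (hg : ContinuousOn g (Set.Ici 0)) (hx : ContinuousOn x (Set.Ici 0))
    (hx' : ∀ t : ℝ, 0 < t → HasDerivAt x (-f (x t) + g t) t)
    {s t : ℝ} (hs : 0 < s) (hst : s ≤ t) :
    x t - x s = ∫ u in s..t, (-f (x u) + g u) := by
  have hsub : Set.uIcc s t ⊆ Set.Ici 0 := by
    rw [Set.uIcc_of_le hst]
    exact fun u hu => le_trans hs.le hu.1
  symm
  refine intervalIntegral.integral_eq_sub_of_hasDerivAt (fun u hu => hx' u ?_) ?_
  · rw [Set.uIcc_of_le hst] at hu; exact lt_of_lt_of_le hs hu.1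
  · exact (((hf.comp_continuousOn (hx.mono hsub)).neg).add (hg.mono hsub)).intervalIntegrable

/-- One-sided bound: eventually `x t ≤ ε`. -/
private lemma aux_upper {f g x : ℝ → ℝ} (hf_cont : Continuous f)
    (hf_sign : ∀ y : ℝ, y ≠ 0 → 0 < y * f y)
    (hg_cont : ContinuousOn g (Set.Ici 0))
    (hg_int : IntegrableOn g (Set.Ioi 0))
    (hx_cont : ContinuousOn x (Set.Ici 0))
    (hx' : ∀ t : ℝ, 0 < t → HasDerivAt x (-f (x t) + g t) t) :
    ∀ ε : ℝ, 0 < ε → ∀ᶠ t in atTop, x t ≤ ε := by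
  intro ε hε
  obtain ⟨T, hT0, hTtail⟩ := aux_tail hg_int (ε/2) (by linarith)
  -- continuity of the composed integrand on sub-intervals of [T,∞)
  have hcont_comp : ∀ a b : ℝ, T ≤ a →
      ContinuousOn (fun u => -f (x u) + g u) (Set.Icc a b) := by
    intro a b ha
    have hsub : Set.Icc a b ⊆ Set.Ici 0 := fun u hu => le_trans (le_trans hT0.le ha) hu.1
    exact ((hf_cont.comp_continuousOn (hx_cont.mono hsub)).neg).add (hg_cont.mono hsub)
  have hgii : ∀ a b : ℝ, T ≤ a → a ≤ b → IntervalIntegrable g volume a b := by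
    intro a b ha hab
    have h0a : (0:ℝ) ≤ a := le_trans hT0.le ha
    exact aux_ii hg_int h0a (le_trans h0a hab)
  have hgabs_ii : ∀ a b : ℝ, T ≤ a → a ≤ b →
      IntervalIntegrable (fun u => |g u|) volume a b := by
    intro a b ha hab
    have h0a : (0:ℝ) ≤ a := le_trans hT0.le ha
    exact aux_ii hg_int.abs h0a (le_trans h0a hab)
  have hcompii : ∀ a b : ℝ, T ≤ a → a ≤ b →
      IntervalIntegrable (fun u => -f (x u) + g u) volume a b := by
    intro a b ha hab
    apply ContinuousOn.intervalIntegrable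
    rw [Set.uIcc_of_le hab]
    exact hcont_comp a b ha
  -- small-g integral bound
  have hgsmall : ∀ a b : ℝ, T ≤ a → a ≤ b → (∫ u in a..b, g u) ≤ ε/2 := by
    intro a b ha hab
    have h1 : (∫ u in a..b, g u) ≤ ∫ u in a..b, |g u| :=
      intervalIntegral.integral_mono_on hab (hgii a b ha hab) (hgabs_ii a b ha hab)
        (fun u _ => le_abs_self _)
    linarith [hTtail a b ha hab]
  -- Step A: there is t₀ ≥ T with x t₀ ≤ ε/2
  have stepA : ∃ t₀ : ℝ, T ≤ t₀ ∧ x t₀ ≤ ε/2 := by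
    by_contra h
    push_neg at h
    -- so x t > ε/2 for all t ≥ T
    have hbig : ∀ t, T ≤ t → ε/2 < x t := h
    -- upper bound B
    have hbound : ∀ t, T ≤ t → x t ≤ x T + ε/2 := by
      intro t ht
      have hftc := aux_ftc hf_cont hg_cont hx_cont hx' hT0 ht
      have hmono : (∫ u in T..t, (-f (x u) + g u)) ≤ ∫ u in T..t, g u := by
        refine intervalIntegral.integral_mono_on ht (hcompii T t le_rfl ht)
          (hgii T t le_rfl ht) (fun u hu => ?_)
        have hxu : 0 < x u := lt_trans (by linarith) (hbig u hu.1)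
        have := hf_sign (x u) hxu.ne'
        nlinarith
      have := hgsmall T t le_rfl ht
      linarith
    set B := x T + ε/2 with hB
    have hKne : Set.Nonempty (Set.Icc (ε/2) B) := by
      refine ⟨ε/2, le_refl _, ?_⟩
      have := hbig T le_rfl
      linarith
    obtain ⟨z, hzK, hzmin⟩ := isCompact_Icc.exists_isMinOn hKne hf_cont.continuousOn
    have hz0 : 0 < z := lt_of_lt_of_le (by linarith) hzK.1
    have hm : 0 < f z := by nlinarith [hf_sign z hz0.ne']
    -- decay
    have hdecay : ∀ t, T ≤ t → x t ≤ x T + ε/2 - f z * (t - T) := by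
      intro t ht
      have hftc := aux_ftc hf_cont hg_cont hx_cont hx' hT0 ht
      have hmono : (∫ u in T..t, (-f (x u) + g u)) ≤ ∫ u in T..t, (-f z + g u) := by
        refine intervalIntegral.integral_mono_on ht (hcompii T t le_rfl ht)
          ((intervalIntegrable_const).add (hgii T t le_rfl ht)) (fun u hu => ?_)
        have hxu : x u ∈ Set.Icc (ε/2) B := ⟨(hbig u hu.1).le, hbound u hu.1⟩
        have h2 : f z ≤ f (x u) := hzmin hxu
        linarith
      have hsplit : (∫ u in T..t, (-f z + g u)) = (t - T) * (-f z) + ∫ u in T..t, g u := by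
        rw [intervalIntegral.integral_add intervalIntegrable_const (hgii T t le_rfl ht),
          intervalIntegral.integral_const]
        simp [smul_eq_mul]
      have := hgsmall T t le_rfl ht
      nlinarith
    -- contradiction
    set t := T + (x T + ε/2) / f z with htdef
    have hTt : T ≤ t := by
      have : 0 ≤ (x T + ε/2) / f z := by
        apply div_nonneg _ hm.le
        have := hbig T le_rfl; linarith
      rw [htdef]; linarith
    have h1 := hdecay t hTt
    have h2 := hbig t hTt
    have h3 : f z * (t - T) = x T + ε/2 := by
      rw [htdef]; field_simp; ring
    linarith
  obtain ⟨t₀, ht₀T, ht₀⟩ := stepA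
  -- Step B: x t ≤ ε for all t ≥ t₀
  rw [eventually_atTop]
  refine ⟨t₀, fun t ht => ?_⟩
  by_contra hcon
  push_neg at hcon
  have ht₀t : t₀ < t := by
    rcases eq_or_lt_of_le ht with h | h
    · subst h; linarith
    · exact h
  set S := {u ∈ Set.Icc t₀ t | x u ≤ ε/2} with hSdef
  have hSne : t₀ ∈ S := ⟨⟨le_rfl, ht₀t.le⟩, ht₀⟩
  have hSbdd : BddAbove S := ⟨t, fun u hu => hu.1.2⟩
  have hSclosed : IsClosed S := by
    have hsub : Set.Icc t₀ t ⊆ Set.Ici 0 := fun u hu => le_trans (le_trans hT0.le ht₀T) hu.1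
    have : S = Set.Icc t₀ t ∩ x ⁻¹' Set.Iic (ε/2) := by
      ext u; simp [hSdef, Set.mem_setOf_eq, and_comm]
    rw [this]
    exact (hx_cont.mono hsub).preimage_isClosed_of_isClosed isClosed_Icc isClosed_Iic
  set s := sSup S with hsdef
  have hsS : s ∈ S := hSclosed.csSup_mem ⟨t₀, hSne⟩ hSbdd
  have hs0 : 0 < s := lt_of_lt_of_le hT0 (le_trans ht₀T hsS.1.1)
  have hst : s < t := by
    rcases eq_or_lt_of_le hsS.1.2 with h | h
    · exfalso; have := hsS.2; rw [h] at this; linarith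
    · exact h
  -- on (s, t], x u > ε/2
  have hmid : ∀ u, s < u → u ≤ t → ε/2 < x u := by
    intro u hsu hut
    by_contra hle
    push_neg at hle
    have huS : u ∈ S := ⟨⟨le_trans hsS.1.1 hsu.le, hut⟩, hle⟩
    exact absurd (le_csSup hSbdd huS) (not_le.mpr hsu)
  -- x s ≥ ε/2 by continuity from the right
  have hxs_ge : ε/2 ≤ x s := by
    have htend : Tendsto x (nhdsWithin s (Set.Ioi s)) (nhds (x s)) := by
      have h1 : ContinuousWithinAt x (Set.Ici 0) s :=
        hx_cont s (le_of_lt hs0)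
      exact h1.mono_of_mem_nhdsWithin (mem_nhdsWithin_of_mem_nhds
        (Ici_mem_nhds hs0)) |>.tendsto.mono_left (nhdsWithin_mono s (fun u hu => le_of_lt (lt_trans hs0 hu)))
    refine ge_of_tendsto htend ?_
    have hmem : Set.Iio t ∈ nhdsWithin s (Set.Ioi s) :=
      mem_nhdsWithin_of_mem_nhds (Iio_mem_nhds hst)
    filter_upwards [hmem, self_mem_nhdsWithin] with u hu1 hu2
    exact (hmid u hu2 (le_of_lt hu1)).le
  -- FTC on [s,t]
  have hftc := aux_ftc hf_cont hg_cont hx_cont hx' hs0 hst.le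
  have hmono : (∫ u in s..t, (-f (x u) + g u)) ≤ ∫ u in s..t, g u := by
    refine intervalIntegral.integral_mono_on hst.le
      (hcompii s t (le_trans ht₀T hsS.1.1) hst.le)
      (hgii s t (le_trans ht₀T hsS.1.1) hst.le) (fun u hu => ?_)
    have hxu : 0 < x u := by
      rcases eq_or_lt_of_le hu.1 with h | h
      · subst h; linarith
      · have := hmid u h hu.2; linarith
    have := hf_sign (x u) hxu.ne'
    nlinarith
  have hgs := hgsmall s t (le_trans ht₀T hsS.1.1) hst.le
  have hxs_le : x s ≤ ε/2 := hsS.2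
  linarith

/-- If `f` is continuous with `x f(x) > 0` for `x ≠ 0`, `f(0) = 0`, `g` is continuous on
`[0,∞)` and integrable on `(0,∞)`, then every continuous solution of
`x' = -f(x) + g`, `x(0) = ξ`, tends to `0` at `∞`. -/
theorem stmt_0 (f g : ℝ → ℝ) (ξ : ℝ)
    (hf_cont : Continuous f)
    (hf_sign : ∀ y : ℝ, y ≠ 0 → 0 < y * f y) (hf_zero : f 0 = 0)
    (hg_cont : ContinuousOn g (Set.Ici 0))
    (hg_int : IntegrableOn g (Set.Ioi 0))
    (x : ℝ → ℝ) (hx : IsSol f g ξ x) :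
    Tendsto x atTop (nhds 0) := by
  obtain ⟨hx_cont, -, hx'⟩ := hx
  have hupper := aux_upper hf_cont hf_sign hg_cont hg_int hx_cont hx'
  have hlower := aux_upper (f := fun y => -f (-y)) (g := fun t => -g t) (x := fun t => -x t)
    (by continuity)
    (fun y hy => by
      have := hf_sign (-y) (neg_ne_zero.mpr hy)
      show 0 < y * (-f (-y))
      nlinarith)
    hg_cont.neg hg_int.neg hx_cont.neg
    (fun t ht => by
      have h : HasDerivAt (fun t => -x t) (-(-f (x t) + g t)) t := (hx' t ht).neg
      convert h using 1
      simp only [neg_neg]; ring)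
  rw [NormedAddCommGroup.tendsto_nhds_zero]
  intro ε hε
  filter_upwards [hupper (ε/2) (by linarith), hlower (ε/2) (by linarith)] with t h1 h2
  rw [Real.norm_eq_abs]
  have : |x t| ≤ ε/2 := abs_le.mpr ⟨by linarith, h1⟩
  linarith
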